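/- Let v ∈ H with v ≠ 0, let T_v be the associated boost on ℋ = ℝ × H, and set α = log(c_v + ‖v‖) where c_v = √(1+‖v‖²). Then: (a) T_v(0,w) = (0,w) for every w ∈ H orthogonal to v; (b) T_v(1, v/‖v‖) = e^{α}·(1, v/‖v‖); (c) T_v(1, −v/‖v‖) = e^{−α}·(1, −v/‖v‖); moreover e^{α} = c_v + ‖v‖ and e^{−α} = c_v − ‖v‖. -/

import Mathlib

open scoped RealInnerProductSpace

noncomputable section

variable {H : Type*} [NormedAddCommGroup H] [InnerProductSpace ℝ H]

/-- The rank-one operator `a ⊗ b : x ↦ ⟪b,x⟫ • a`. -/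
def rankOne (a b : H) : H →L[ℝ] H := (innerSL ℝ b).smulRight a

/-- The boost `T_v` associated with a vector `v`, with the convention `T_0 = id`. -/
def boost (v : H) : (ℝ × H) →L[ℝ] (ℝ × H) :=
  letI : Decidable (v = 0) := Classical.dec _
  if v = 0 then ContinuousLinearMap.id ℝ (ℝ × H)
  else
    ((Real.sqrt (1 + ‖v‖ ^ 2) • ContinuousLinearMap.fst ℝ ℝ H +
        (innerSL ℝ v).comp (ContinuousLinearMap.snd ℝ ℝ H)).prod
      ((ContinuousLinearMap.fst ℝ ℝ H).smulRight v +
        (ContinuousLinearMap.id ℝ H +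
            ((Real.sqrt (1 + ‖v‖ ^ 2) - 1) / ‖v‖ ^ 2) • rankOne v v).comp
          (ContinuousLinearMap.snd ℝ ℝ H)))

-- auxiliary
lemma boost_apply (v : H) (hv : v ≠ 0) (s : ℝ) (x : H) :
    boost v (s, x) = (Real.sqrt (1 + ‖v‖ ^ 2) * s + ⟪v, x⟫,
      s • v + (x + ((Real.sqrt (1 + ‖v‖ ^ 2) - 1) / ‖v‖ ^ 2) • ⟪v, x⟫ • v)) := by
  rw [boost]
  simp [if_neg hv, rankOne, ContinuousLinearMap.prod_apply, smul_smul]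

/-- With `α = log (c_v + ‖v‖)`, the boost `T_v` fixes the vectors `(0,w)` with `w ⊥ v` and
has `(1, ±v/‖v‖)` as eigenvectors with eigenvalues `e^{±α} = c_v ± ‖v‖`. -/
theorem boost_eigenvalues (v : H) (hv : v ≠ 0) (α : ℝ)
    (hα : α = Real.log (Real.sqrt (1 + ‖v‖ ^ 2) + ‖v‖)) :
    (∀ w : H, ⟪v, w⟫ = 0 → boost v (0, w) = (0, w)) ∧
      boost v ((1 : ℝ), ‖v‖⁻¹ • v) = Real.exp α • ((1 : ℝ), ‖v‖⁻¹ • v) ∧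
      boost v ((1 : ℝ), -(‖v‖⁻¹ • v)) = Real.exp (-α) • ((1 : ℝ), -(‖v‖⁻¹ • v)) ∧
      Real.exp α = Real.sqrt (1 + ‖v‖ ^ 2) + ‖v‖ ∧
      Real.exp (-α) = Real.sqrt (1 + ‖v‖ ^ 2) - ‖v‖ := by
  have hn : (0:ℝ) < ‖v‖ := norm_pos_iff.mpr hv
  set c := Real.sqrt (1 + ‖v‖ ^ 2) with hc
  have hc2 : c ^ 2 = 1 + ‖v‖ ^ 2 := Real.sq_sqrt (by positivity)
  have hcpos : 0 < c := Real.sqrt_pos.mpr (by positivity)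
  have hsum : 0 < c + ‖v‖ := by linarith
  have heα : Real.exp α = c + ‖v‖ := by rw [hα, Real.exp_log hsum]
  have hprod : (c + ‖v‖) * (c - ‖v‖) = 1 := by ring_nf; nlinarith
  have heα' : Real.exp (-α) = c - ‖v‖ := by
    rw [Real.exp_neg, heα, inv_eq_of_mul_eq_one_right hprod]
  have hiv : ⟪v, v⟫ = ‖v‖ ^ 2 := real_inner_self_eq_norm_sq v
  refine ⟨fun w hw => ?_, ?_, ?_, heα, heα'⟩
  · rw [boost_apply v hv]
    simp [hw]
  · rw [boost_apply v hv]
    have h1 : ⟪v, ‖v‖⁻¹ • v⟫ = ‖v‖ := by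
      rw [real_inner_smul_right, hiv]; field_simp
    rw [h1, heα]
    refine Prod.ext (by simp [hc]) ?_
    simp only [Prod.smul_snd, one_smul, smul_smul]
    match_scalars
    field_simp
    ring
  · rw [boost_apply v hv]
    have h1 : ⟪v, -(‖v‖⁻¹ • v)⟫ = -‖v‖ := by
      rw [inner_neg_right, real_inner_smul_right, hiv]; field_simp
    rw [h1, heα']
    refine Prod.ext (by simp; ring) ?_
    simp only [Prod.smul_snd, one_smul]
    match_scalars
    field_simp
    ring
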